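/- Localization of solutions of the invariance equation for CM1: if μ is a finitely additive probability measure on the Borel σ-algebra of [0,1] with μ((0,1)) = 1 and ∫_{(0,1)} (1−x) μ(dx) = 0, then (i) μ([a,b]) = 0 for every closed interval [a,b] ⊂ (0,1); (ii) μ((ε,1)) = 1 and μ((0,ε)) = 0 for every ε ∈ (0,1); (iii) μ is purely finitely additive (in particular, μ is not countably additive). -/

import Mathlib

open MeasureTheory Set Filter Topology Function

/-- A bounded finitely additive set function on the σ-algebra. -/
def IsFinAdd {X : Type*} [MeasurableSpace X] (μ : Set X → ℝ) : Prop :=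
  μ ∅ = 0 ∧ ∀ E F : Set X, MeasurableSet E → MeasurableSet F → Disjoint E F →
    μ (E ∪ F) = μ E + μ F

/-- Nonnegativity on measurable sets. -/
def IsNonnegSF {X : Type*} [MeasurableSpace X] (μ : Set X → ℝ) : Prop :=
  ∀ E : Set X, MeasurableSet E → 0 ≤ μ E

/-- Countable additivity on the σ-algebra. -/
def IsCtblAdd {X : Type*} [MeasurableSpace X] (μ : Set X → ℝ) : Prop :=
  ∀ E : ℕ → Set X, (∀ n, MeasurableSet (E n)) → Pairwise (Disjoint on E) →
    HasSum (fun n => μ (E n)) (μ (⋃ n, E n))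

/-- A nonnegative finitely additive measure is purely finitely additive if the only
countably additive measure `lam` with `0 ≤ lam ≤ μ` is `lam = 0`. -/
def IsPurelyFinAdd {X : Type*} [MeasurableSpace X] (μ : Set X → ℝ) : Prop :=
  ∀ lam : Set X → ℝ, IsFinAdd lam → IsCtblAdd lam →
    (∀ E, MeasurableSet E → 0 ≤ lam E) → (∀ E, MeasurableSet E → lam E ≤ μ E) →
    ∀ E, MeasurableSet E → lam E = 0

/-- The integral of a bounded measurable function with respect to a (finitely additive)
set function, defined by the layer-cake formula. -/
noncomputable def faIntegral {X : Type*} [MeasurableSpace X] (μ : Set X → ℝ) (f : X → ℝ) : ℝ :=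
  (∫ t in Set.Ioi (0:ℝ), μ {x | t < f x}) - (∫ t in Set.Ioi (0:ℝ), μ {x | f x < -t})

/-- The Dirac measure at `y`, as a set function. -/
noncomputable def diracSF (y : ℝ) (E : Set ℝ) : ℝ := E.indicator (fun _ => (1:ℝ)) y

/-- The transition function of CM1: `p(x,·) = x·δ_{x²} + (1-x)·δ₀` on `(0,1)`,
`p(0,·) = δ₀`, `p(1,·) = δ₁` (the formula below specializes correctly at `0` and `1`). -/
noncomputable def p1 (x : ℝ) (E : Set ℝ) : ℝ :=
  x * diracSF (x ^ 2) E + (1 - x) * diracSF 0 E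

/-- The transition function of CM2: `p(x,·) = (1-x)·δ_{x²} + x·δ₀` on `(0,1)`,
`p(0,·) = δ₀`, `p(1,·) = δ₁`. -/
noncomputable def p2 (x : ℝ) (E : Set ℝ) : ℝ :=
  if x = 1 then diracSF 1 E else (1 - x) * diracSF (x ^ 2) E + x * diracSF 0 E

/-- The transition function of CM3: the CM1 rule on `[0,1/2]`, the CM2 rule on `(1/2,1)`,
`p(1,·) = δ₁`. -/
noncomputable def p3 (x : ℝ) (E : Set ℝ) : ℝ :=
  if x = 1 then diracSF 1 E
  else if x ≤ 1 / 2 then x * diracSF (x ^ 2) E + (1 - x) * diracSF 0 E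
  else (1 - x) * diracSF (x ^ 2) E + x * diracSF 0 E

/-- The `n`-step transition function of CM1 (`p1n 0` is the identity kernel, and
`p1n (n+1) x E = ∫ p1n n (y,E) p(x,dy)` is the integral convolution). -/
noncomputable def p1n : ℕ → ℝ → Set ℝ → ℝ
  | 0 => fun x E => diracSF x E
  | n + 1 => fun x E => faIntegral (p1 x) fun y => p1n n y E

/-- The `n`-step transition function of CM2. -/
noncomputable def p2n : ℕ → ℝ → Set ℝ → ℝ
  | 0 => fun x E => diracSF x E
  | n + 1 => fun x E => faIntegral (p2 x) fun y => p2n n y E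

/-- The `n`-step transition function of CM3. -/
noncomputable def p3n : ℕ → ℝ → Set ℝ → ℝ
  | 0 => fun x E => diracSF x E
  | n + 1 => fun x E => faIntegral (p3 x) fun y => p3n n y E

lemma faMono (μ : Set ℝ → ℝ) (hfa : IsFinAdd μ) (hpos : IsNonnegSF μ)
    {E F : Set ℝ} (hE : MeasurableSet E) (hF : MeasurableSet F) (hEF : E ⊆ F) :
    μ E ≤ μ F := by
  have h1 : μ (E ∪ F \ E) = μ E + μ (F \ E) :=
    hfa.2 E (F \ E) hE (hF.diff hE) disjoint_sdiff_self_right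
  rw [Set.union_diff_cancel hEF] at h1
  have := hpos (F \ E) (hF.diff hE)
  linarith

lemma key_zero (μ : Set ℝ → ℝ)
    (hfa : IsFinAdd μ) (hpos : IsNonnegSF μ) (hprob : μ Set.univ = 1)
    (hint : faIntegral μ ((Set.Ioo (0:ℝ) 1).indicator fun x => 1 - x) = 0) :
    ∀ ε : ℝ, 0 < ε → ε < 1 → μ (Set.Ioo 0 ε) = 0 := by
  set f : ℝ → ℝ := (Set.Ioo (0:ℝ) 1).indicator fun x => 1 - x with hf
  have hf_nonneg : ∀ x, 0 ≤ f x := by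
    intro x
    by_cases hx : x ∈ Set.Ioo (0:ℝ) 1
    · simp [hf, Set.indicator_of_mem hx]; linarith [hx.2]
    · simp [hf, Set.indicator_of_notMem hx]
  set g : ℝ → ℝ := fun t => μ (Set.Ioo 0 (1 - t)) with hg
  have ganti : Antitone g := by
    intro s t hst
    exact faMono μ hfa hpos measurableSet_Ioo measurableSet_Ioo
      (Set.Ioo_subset_Ioo_right (by linarith))
  have gnonneg : ∀ t, 0 ≤ g t := fun t => hpos _ measurableSet_Ioo
  have gle : ∀ t, g t ≤ 1 := by
    intro t
    have h := faMono μ hfa hpos (E := Set.Ioo 0 (1 - t)) (F := Set.univ)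
      measurableSet_Ioo MeasurableSet.univ (Set.subset_univ _)
    rw [hprob] at h; exact h
  -- rewrite hint to ∫ t in Ioi 0, g t = 0
  have hset : ∀ t ∈ Set.Ioi (0:ℝ), {x | t < f x} = Set.Ioo 0 (1 - t) := by
    intro t ht
    ext x
    simp only [Set.mem_setOf_eq, Set.mem_Ioo]
    by_cases hx : x ∈ Set.Ioo (0:ℝ) 1
    · rw [hf, Set.indicator_of_mem hx]
      constructor
      · intro h; exact ⟨hx.1, by linarith⟩
      · intro h; linarith [h.2]
    · rw [hf, Set.indicator_of_notMem hx]
      simp only [Set.mem_Ioo, not_and, not_lt] at hx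
      constructor
      · intro h; exact absurd ht.out (by linarith)
      · intro h
        have h1 : 0 < x := h.1
        have := hx h1
        have := ht.out
        linarith [h.2]
  have hset2 : ∀ t ∈ Set.Ioi (0:ℝ), {x | f x < -t} = (∅ : Set ℝ) := by
    intro t ht
    ext x
    simp only [Set.mem_setOf_eq, Set.mem_empty_iff_false, iff_false, not_lt]
    have := hf_nonneg x
    have := ht.out
    linarith
  have hint2 : (∫ t in Set.Ioi (0:ℝ), g t) = 0 := by
    have e1 : (∫ t in Set.Ioi (0:ℝ), μ {x | t < f x}) = ∫ t in Set.Ioi (0:ℝ), g t :=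
      MeasureTheory.setIntegral_congr_fun measurableSet_Ioi (fun t ht => by rw [hset t ht])
    have e2 : (∫ t in Set.Ioi (0:ℝ), μ {x | f x < -t}) = 0 := by
      rw [MeasureTheory.setIntegral_congr_fun (g := fun _ => (0:ℝ)) measurableSet_Ioi
        (fun t ht => by rw [hset2 t ht]; exact hfa.1)]
      simp
    rw [faIntegral, e1, e2] at hint
    linarith
  -- integrability of g on Ioi 0
  have gmeas : Measurable g := ganti.measurable
  have gzero_ge1 : ∀ t : ℝ, 1 ≤ t → g t = 0 := by
    intro t ht
    rw [hg]
    simp only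
    rw [Set.Ioo_eq_empty (by intro h; simp at h; linarith), hfa.1]
  have gint : IntegrableOn g (Set.Ioi (0:ℝ)) := by
    rw [← Set.Ioc_union_Ioi_eq_Ioi (zero_le_one (α := ℝ))]
    apply MeasureTheory.IntegrableOn.union
    · apply MeasureTheory.Measure.integrableOn_of_bounded (M := 1)
        (by simp) gmeas.aestronglyMeasurable
      filter_upwards with t
      rw [Real.norm_eq_abs, abs_le]
      exact ⟨by linarith [gnonneg t], gle t⟩
    · apply (integrableOn_congr_fun (g := fun _ => (0:ℝ)) ?_ measurableSet_Ioi).mpr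
      · exact (integrableOn_const_iff).mpr (Or.inl (by simp))
      · intro t ht; exact gzero_ge1 t (le_of_lt ht.out)
  -- g = 0 a.e. on Ioi 0
  have gae : ∀ᵐ t : ℝ, t ∈ Set.Ioi (0:ℝ) → g t = 0 := by
    rw [← MeasureTheory.ae_restrict_iff' measurableSet_Ioi]
    have h0 : (0:ℝ → ℝ) ≤ᶠ[ae ((volume : Measure ℝ).restrict (Set.Ioi 0))] g :=
      Filter.Eventually.of_forall gnonneg
    exact (MeasureTheory.integral_eq_zero_iff_of_nonneg_ae h0 gint).mp hint2
  intro ε hε hε1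
  by_contra hne
  have hgpos : 0 < g (1 - ε) := by
    rcases lt_or_eq_of_le (gnonneg (1 - ε)) with h | h
    · exact h
    · exact absurd h.symm (by rw [hg]; simpa using hne)
  have hsub : Set.Ioo (0:ℝ) (1 - ε) ⊆ {t | ¬ (t ∈ Set.Ioi (0:ℝ) → g t = 0)} := by
    intro t ht
    simp only [Set.mem_setOf_eq, not_forall]
    refine ⟨ht.1, ?_⟩
    have : g (1 - ε) ≤ g t := ganti (le_of_lt ht.2)
    intro h; rw [h] at this; linarith
  have hnull : (volume : Measure ℝ) {t | ¬ (t ∈ Set.Ioi (0:ℝ) → g t = 0)} = 0 := gae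
  have := measure_mono_null hsub hnull
  rw [Real.volume_Ioo] at this
  simp only [sub_zero] at this
  have : (1 - ε : ℝ) ≤ 0 := by
    by_contra hc
    push_neg at hc
    rw [ENNReal.ofReal_eq_zero] at this
    linarith
  linarith

-- auxiliary: union of annuli is Ioo 0 1
lemma annuli_union :
    (⋃ n : ℕ, (if n = 0 then Set.Ioo (0:ℝ) (1/2)
      else Set.Ico (1 - 1/(n+1 : ℝ)) (1 - 1/(n+2 : ℝ)))) = Set.Ioo 0 1 := by
  ext x
  simp only [Set.mem_iUnion, Set.mem_Ioo]
  constructor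
  · rintro ⟨n, hn⟩
    by_cases h : n = 0
    · rw [if_pos h] at hn
      exact ⟨hn.1, by linarith [hn.2]⟩
    · rw [if_neg h] at hn
      have hn1 : (1:ℝ) ≤ (n:ℝ) := by exact_mod_cast Nat.one_le_iff_ne_zero.mpr h
      have h1 : (0:ℝ) < (n:ℝ) + 1 := by linarith
      have h2 : (0:ℝ) < (n:ℝ) + 2 := by linarith
      have hlb : (0:ℝ) < 1 - 1/((n:ℝ)+1) := by
        rw [sub_pos, div_lt_one h1]; linarith
      have hub : 1 - 1/((n:ℝ)+2) < 1 := by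
        have : (0:ℝ) < 1/((n:ℝ)+2) := by positivity
        linarith
      exact ⟨lt_of_lt_of_le hlb hn.1, lt_trans hn.2 hub⟩
  · rintro ⟨hx0, hx1⟩
    by_cases h : x < 1/2
    · exact ⟨0, by rw [if_pos rfl]; exact ⟨hx0, h⟩⟩
    · push_neg at h
      have h1x : (0:ℝ) < 1 - x := by linarith
      set n := ⌊x / (1 - x)⌋₊ with hn
      have hge1 : (1:ℝ) ≤ x / (1 - x) := by
        rw [le_div_iff₀ h1x]; linarith
      have hn1 : 1 ≤ n := Nat.le_floor (by exact_mod_cast hge1)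
      have hfl : (n:ℝ) ≤ x / (1 - x) := Nat.floor_le (by positivity)
      have hfu : x / (1 - x) < (n:ℝ) + 1 := Nat.lt_floor_add_one _
      have hle : (n:ℝ) * (1 - x) ≤ x := by
        rw [← le_div_iff₀ h1x]; exact hfl
      have hlt : x < ((n:ℝ) + 1) * (1 - x) := by
        rw [← div_lt_iff₀ h1x]; exact hfu
      refine ⟨n, ?_⟩
      rw [if_neg (by omega)]
      have hp1 : (0:ℝ) < (n:ℝ) + 1 := by positivity
      have hp2 : (0:ℝ) < (n:ℝ) + 2 := by positivity
      constructor
      · have h1 : 1 - x ≤ 1/((n:ℝ)+1) := by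
          rw [le_div_iff₀ hp1]; nlinarith
        linarith
      · have h2 : 1/((n:ℝ)+2) < 1 - x := by
          rw [div_lt_iff₀ hp2]; nlinarith
        linarith

lemma annuli_disjoint :
    Pairwise (Disjoint on fun n : ℕ => (if n = 0 then Set.Ioo (0:ℝ) (1/2)
      else Set.Ico (1 - 1/(n+1 : ℝ)) (1 - 1/(n+2 : ℝ)))) := by
  have key : ∀ m n : ℕ, m < n → Disjoint
      (if m = 0 then Set.Ioo (0:ℝ) (1/2) else Set.Ico (1 - 1/(m+1 : ℝ)) (1 - 1/(m+2 : ℝ)))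
      (if n = 0 then Set.Ioo (0:ℝ) (1/2) else Set.Ico (1 - 1/(n+1 : ℝ)) (1 - 1/(n+2 : ℝ))) := by
    intro m n hmn
    have hn0 : n ≠ 0 := by omega
    rw [if_neg hn0]
    have hmono : (1:ℝ) - 1/((m:ℝ)+2) ≤ 1 - 1/((n:ℝ)+1) := by
      have hc : ((m:ℝ)+2) ≤ ((n:ℝ)+1) := by
        have : (m:ℝ) + 1 ≤ (n:ℝ) := by exact_mod_cast Nat.succ_le_of_lt hmn
        linarith
      have h2 : (0:ℝ) < (m:ℝ) + 2 := by positivity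
      have h1 : (0:ℝ) < (n:ℝ) + 1 := by positivity
      have := one_div_le_one_div_of_le h2 hc
      linarith
    by_cases hm : m = 0
    · rw [if_pos hm]
      rw [Set.disjoint_left]
      intro x hx hx'
      have h1 : x < 1/2 := by simpa [hm] using hx.2
      have h2 : (1:ℝ) - 1/((n:ℝ)+1) ≤ x := hx'.1
      have : (1:ℝ)/2 ≤ 1 - 1/((n:ℝ)+1) := by
        have := hmono
        simp only [hm, Nat.cast_zero] at this
        norm_num at this ⊢
        linarith
      linarith
    · rw [if_neg hm]
      rw [Set.disjoint_left]
      intro x hx hx'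
      have := hx.2
      have := hx'.1
      linarith
  intro m n hmn
  rcases lt_or_gt_of_ne hmn with h | h
  · exact key m n h
  · exact (key n m h).symm

/-- Localization of solutions of the invariance equation for CM1: if `μ((0,1)) = 1` and
`∫_{(0,1)} (1-x) μ(dx) = 0` then (i) `μ([a,b]) = 0` for every `[a,b] ⊂ (0,1)`;
(ii) `μ((ε,1)) = 1` and `μ((0,ε)) = 0` for every `ε ∈ (0,1)`; (iii) `μ` is purely
finitely additive, in particular not countably additive. -/
theorem cm1_localization (μ : Set ℝ → ℝ)
    (hfa : IsFinAdd μ) (hpos : IsNonnegSF μ) (hprob : μ Set.univ = 1)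
    (hIcc : μ (Set.Icc 0 1) = 1) (hIoo : μ (Set.Ioo 0 1) = 1)
    (hint : faIntegral μ ((Set.Ioo (0:ℝ) 1).indicator fun x => 1 - x) = 0) :
    (∀ a b : ℝ, 0 < a → a ≤ b → b < 1 → μ (Set.Icc a b) = 0) ∧
    (∀ ε ∈ Set.Ioo (0:ℝ) 1, μ (Set.Ioo ε 1) = 1 ∧ μ (Set.Ioo 0 ε) = 0) ∧
    IsPurelyFinAdd μ ∧ ¬ IsCtblAdd μ := by
  have hzero := key_zero μ hfa hpos hprob hint
  -- (i)
  have part1 : ∀ a b : ℝ, 0 < a → a ≤ b → b < 1 → μ (Set.Icc a b) = 0 := by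
    intro a b ha hab hb
    have hsub : Set.Icc a b ⊆ Set.Ioo 0 ((b+1)/2) :=
      fun x hx => ⟨lt_of_lt_of_le ha hx.1, by linarith [hx.2]⟩
    have h1 := faMono μ hfa hpos measurableSet_Icc measurableSet_Ioo hsub
    rw [hzero ((b+1)/2) (by linarith) (by linarith)] at h1
    exact le_antisymm h1 (hpos _ measurableSet_Icc)
  -- (ii)
  have part2 : ∀ ε ∈ Set.Ioo (0:ℝ) 1, μ (Set.Ioo ε 1) = 1 ∧ μ (Set.Ioo 0 ε) = 0 := by
    intro ε hε
    obtain ⟨hε0, hε1⟩ := hε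
    refine ⟨?_, hzero ε hε0 hε1⟩
    have hIoc : μ (Set.Ioc 0 ε) = 0 := by
      have hsub : Set.Ioc 0 ε ⊆ Set.Ioo 0 ((ε+1)/2) :=
        fun x hx => ⟨hx.1, by linarith [hx.2]⟩
      have h1 := faMono μ hfa hpos measurableSet_Ioc measurableSet_Ioo hsub
      rw [hzero ((ε+1)/2) (by linarith) (by linarith)] at h1
      exact le_antisymm h1 (hpos _ measurableSet_Ioc)
    have hdisj : Disjoint (Set.Ioc (0:ℝ) ε) (Set.Ioo ε 1) := by
      rw [Set.disjoint_left]; intro x hx hx'; linarith [hx.2, hx'.1]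
    have hu := hfa.2 _ _ measurableSet_Ioc measurableSet_Ioo hdisj
    rw [Set.Ioc_union_Ioo_eq_Ioo (le_of_lt hε0) hε1, hIoo, hIoc] at hu
    linarith
  -- complement of Ioo 0 1 has μ-measure 0
  have hcompl : μ ((Set.Ioo (0:ℝ) 1)ᶜ) = 0 := by
    have hu := hfa.2 (Set.Ioo (0:ℝ) 1) (Set.Ioo (0:ℝ) 1)ᶜ measurableSet_Ioo
      measurableSet_Ioo.compl disjoint_compl_right
    rw [Set.union_compl_self, hprob, hIoo] at hu
    linarith
  -- (iii)
  have part3 : IsPurelyFinAdd μ := by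
    intro lam hlfa hlca hlpos hlle
    -- lam (Ioo 0 1) = 0 using countable additivity
    set E : ℕ → Set ℝ := fun n => (if n = 0 then Set.Ioo (0:ℝ) (1/2)
      else Set.Ico (1 - 1/(n+1 : ℝ)) (1 - 1/(n+2 : ℝ))) with hE
    have hEmeas : ∀ n, MeasurableSet (E n) := by
      intro n
      by_cases h : n = 0
      · rw [hE]; simp only [h, if_pos]; exact measurableSet_Ioo
      · rw [hE]; simp only [if_neg h]; exact measurableSet_Ico
    have hEzero : ∀ n, lam (E n) = 0 := by
      intro n
      have hle : lam (E n) ≤ μ (E n) := hlle _ (hEmeas n)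
      have hge : 0 ≤ lam (E n) := hlpos _ (hEmeas n)
      by_cases h : n = 0
      · have : μ (E 0) = 0 := by
          rw [hE]; simp only [if_pos rfl]
          exact hzero (1/2) (by norm_num) (by norm_num)
        subst h
        rw [this] at hle
        linarith
      · have hn1 : (1:ℝ) ≤ (n:ℝ) := by exact_mod_cast Nat.one_le_iff_ne_zero.mpr h
        have hp1 : (0:ℝ) < (n:ℝ)+1 := by linarith
        have hp2 : (0:ℝ) < (n:ℝ)+2 := by linarith
        have ha : (0:ℝ) < 1 - 1/((n:ℝ)+1) := by
          rw [sub_pos, div_lt_one hp1]; linarith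
        have hab : (1:ℝ) - 1/((n:ℝ)+1) ≤ 1 - 1/((n:ℝ)+2) := by
          have := one_div_le_one_div_of_le hp1 (by linarith : (n:ℝ)+1 ≤ (n:ℝ)+2)
          linarith
        have hb : (1:ℝ) - 1/((n:ℝ)+2) < 1 := by
          have : (0:ℝ) < 1/((n:ℝ)+2) := by positivity
          linarith
        have hmuE : μ (E n) ≤ 0 := by
          have hsub : E n ⊆ Set.Icc (1 - 1/((n:ℝ)+1)) (1 - 1/((n:ℝ)+2)) := by
            rw [hE]; simp only [if_neg h]; exact Set.Ico_subset_Icc_self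
          have := faMono μ hfa hpos (hEmeas n) measurableSet_Icc hsub
          rw [part1 _ _ ha hab hb] at this
          exact this
        linarith
    have hsum := hlca E hEmeas annuli_disjoint
    have hU : (⋃ n, E n) = Set.Ioo (0:ℝ) 1 := annuli_union
    rw [hU] at hsum
    have hlamIoo : lam (Set.Ioo (0:ℝ) 1) = 0 := by
      have h0 : (fun n => lam (E n)) = fun _ => (0:ℝ) := funext hEzero
      rw [h0] at hsum
      exact (hasSum_zero.unique hsum).symm
    have hlamCompl : lam ((Set.Ioo (0:ℝ) 1)ᶜ) = 0 := by
      have h1 := hlle ((Set.Ioo (0:ℝ) 1)ᶜ) measurableSet_Ioo.compl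
      have h2 := hlpos ((Set.Ioo (0:ℝ) 1)ᶜ) measurableSet_Ioo.compl
      rw [hcompl] at h1
      linarith
    have hlamUniv : lam Set.univ = 0 := by
      have hu := hlfa.2 (Set.Ioo (0:ℝ) 1) (Set.Ioo (0:ℝ) 1)ᶜ measurableSet_Ioo
        measurableSet_Ioo.compl disjoint_compl_right
      rw [Set.union_compl_self, hlamIoo, hlamCompl] at hu
      linarith
    intro F hF
    have hu := hlfa.2 F Fᶜ hF hF.compl disjoint_compl_right
    rw [Set.union_compl_self, hlamUniv] at hu
    have h1 := hlpos _ hF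
    have h2 := hlpos _ hF.compl
    linarith
  refine ⟨part1, part2, part3, ?_⟩
  intro hca
  have := part3 μ hfa hca hpos (fun E _ => le_refl _) Set.univ MeasurableSet.univ
  rw [hprob] at this
  norm_num at this
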